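/- Let G be a partial cube isometrically embedded in Q_m, H a gated subgraph of G, and H' an isometric subgraph of Q_m with H ⊆ H' ⊆ C(H), where C(H) is the smallest subcube of Q_m containing H. Let G' be the subgraph of Q_m induced by V(G) ∪ V(H'). Then: (i) G' is an isometric subgraph of Q_m; (ii) H' is gated in G' and for every vertex v of G its gates in H and in H' coincide; (iii) the VC-dimension of G' equals max(vcd(G), vcd(H')). -/

import Mathlib

open Finset
open scoped Classical

variable {U : Type*}

/-- Hamming distance between two vertices of the hypercube `U → Bool`. -/
def hDist [Fintype U] [DecidableEq U] (x y : U → Bool) : ℕ :=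
  (Finset.univ.filter fun i => x i ≠ y i).card

/-- The hypercube graph on `U → Bool`: two vertices are adjacent iff they differ
in exactly one coordinate. -/
def cubeGraph (U : Type*) [Fintype U] [DecidableEq U] : SimpleGraph (U → Bool) where
  Adj x y := hDist x y = 1
  symm := by
    constructor
    intro x y h
    have hs : (Finset.univ.filter fun i => y i ≠ x i) =
        (Finset.univ.filter fun i => x i ≠ y i) := by
      apply Finset.filter_congr
      intro i _
      exact ne_comm
    simpa [hDist, hs] using h
  loopless := by
    constructor
    intro x h
    simp [hDist] at h

/-- Distance between `x` and `y` inside the subgraph of the hypercube induced by `A`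
(`0` if one of them is not in `A`). -/
noncomputable def dIn [Fintype U] [DecidableEq U] (A : Set (U → Bool)) (x y : U → Bool) : ℕ :=
  if h : x ∈ A ∧ y ∈ A then ((cubeGraph U).induce A).dist ⟨x, h.1⟩ ⟨y, h.2⟩ else 0

/-- A set of vertices of the hypercube is a partial cube if its induced graph is connected
and the induced graph distance coincides with the Hamming distance
(i.e. it is an isometric subgraph of the hypercube). -/
def IsPartialCube [Fintype U] [DecidableEq U] (A : Set (U → Bool)) : Prop :=
  ((cubeGraph U).induce A).Connected ∧ ∀ x ∈ A, ∀ y ∈ A, dIn A x y = hDist x y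

/-- `A` shatters the coordinate set `X`. -/
def Shatters [Fintype U] [DecidableEq U] (A : Set (U → Bool)) (X : Finset U) : Prop :=
  ∀ g : U → Bool, ∃ a ∈ A, ∀ i ∈ X, a i = g i

/-- `A` strongly shatters `X`: it contains a full subcube over the coordinates `X`. -/
def StronglyShatters [Fintype U] [DecidableEq U] (A : Set (U → Bool)) (X : Finset U) : Prop :=
  ∃ a : U → Bool, ∀ g : U → Bool, (fun i => if i ∈ X then g i else a i) ∈ A

/-- An ample set family: every shattered set is strongly shattered. -/
def IsAmple [Fintype U] [DecidableEq U] (A : Set (U → Bool)) : Prop :=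
  ∀ X : Finset U, Shatters A X → StronglyShatters A X

/-- The smallest subcube of the hypercube containing `H`. -/
def cubeHull (H : Set (U → Bool)) : Set (U → Bool) := {f | ∀ i, ∃ h ∈ H, f i = h i}

section Helpers

open scoped symmDiff

variable [Fintype U] [DecidableEq U]

lemma hDist_self (x : U → Bool) : hDist x x = 0 := by simp [hDist]

lemma hDist_comm (x y : U → Bool) : hDist x y = hDist y x := by
  unfold hDist
  congr 1
  apply Finset.filter_congr
  intro i _
  exact ne_comm

lemma hDist_eq_zero {x y : U → Bool} (h : hDist x y = 0) : x = y := by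
  funext i
  by_contra hne
  have hi : i ∈ Finset.univ.filter fun i => x i ≠ y i := by simp [hne]
  rw [hDist, Finset.card_eq_zero] at h
  rw [h] at hi
  exact absurd hi (Finset.notMem_empty i)

lemma dset_symmDiff (x y z : U → Bool) :
    (Finset.univ.filter fun i => x i ≠ z i) =
      (Finset.univ.filter fun i => x i ≠ y i) ∆ (Finset.univ.filter fun i => y i ≠ z i) := by
  ext i
  simp only [Finset.mem_symmDiff, Finset.mem_filter, Finset.mem_univ, true_and]
  cases hx : x i <;> cases hy : y i <;> cases hz : z i <;> simp

lemma card_symmDiff_eq_iff {α : Type*} [DecidableEq α] (s t : Finset α) :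
    (s ∆ t).card = s.card + t.card ↔ s ∩ t = ∅ := by
  have h1 : s ∆ t = (s \ t) ∪ (t \ s) := by
    ext a; simp [Finset.mem_symmDiff, Finset.mem_union, Finset.mem_sdiff]
  have hd : Disjoint (s \ t) (t \ s) := disjoint_sdiff_sdiff
  have h2 : (s ∆ t).card = (s \ t).card + (t \ s).card := by
    rw [h1, Finset.card_union_of_disjoint hd]
  have h3 := Finset.card_sdiff_add_card_inter s t
  have h4 := Finset.card_sdiff_add_card_inter t s
  rw [Finset.inter_comm] at h4
  constructor
  · intro h
    have : (s ∩ t).card = 0 := by omega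
    exact Finset.card_eq_zero.mp this
  · intro h
    have h0 : (s ∩ t).card = 0 := by rw [h]; simp
    omega

lemma hDist_add_eq_iff {x y z : U → Bool} :
    hDist x y + hDist y z = hDist x z ↔ ∀ i, y i = x i ∨ y i = z i := by
  rw [hDist, hDist, hDist, dset_symmDiff x y z, eq_comm, card_symmDiff_eq_iff]
  rw [Finset.eq_empty_iff_forall_notMem]
  constructor
  · intro h i
    have := h i
    simp only [Finset.mem_inter, Finset.mem_filter, Finset.mem_univ, true_and] at this
    by_cases h1 : y i = x i
    · exact Or.inl h1
    · refine Or.inr ?_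
      by_contra h2
      exact this ⟨fun e => h1 e.symm, h2⟩
  · intro h i
    simp only [Finset.mem_inter, Finset.mem_filter, Finset.mem_univ, true_and]
    rintro ⟨h1, h2⟩
    rcases h i with e | e
    · exact h1 e.symm
    · exact h2 e

lemma hDist_triangle (x y z : U → Bool) : hDist x z ≤ hDist x y + hDist y z := by
  rw [hDist, hDist, hDist, dset_symmDiff x y z]
  exact le_trans (Finset.card_le_card symmDiff_le_sup) (Finset.card_union_le _ _)

lemma between_agree {x y z : U → Bool} (h : hDist x y + hDist y z = hDist x z) :
    ∀ i, x i = z i → y i = z i := by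
  intro i hi
  rcases hDist_add_eq_iff.mp h i with h1 | h1
  · rw [h1, hi]
  · exact h1

lemma walk_le_hDist {A : Set (U → Bool)} {x y : ↥A}
    (W : ((cubeGraph U).induce A).Walk x y) : hDist x.1 y.1 ≤ W.length := by
  induction W with
  | nil => simp [hDist_self]
  | @cons a b c h p ih =>
    have hadj : hDist a.1 b.1 = 1 := h
    calc hDist a.1 c.1 ≤ hDist a.1 b.1 + hDist b.1 c.1 := hDist_triangle _ _ _
    _ ≤ 1 + p.length := by omega
    _ = (SimpleGraph.Walk.cons h p).length := by
        rw [SimpleGraph.Walk.length_cons]; omega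

lemma walk_mono {A B : Set (U → Bool)} (hAB : A ⊆ B) {x y : ↥A}
    (W : ((cubeGraph U).induce A).Walk x y) :
    ∃ W' : ((cubeGraph U).induce B).Walk ⟨x.1, hAB x.2⟩ ⟨y.1, hAB y.2⟩,
      W'.length = W.length := by
  induction W with
  | nil => exact ⟨SimpleGraph.Walk.nil, rfl⟩
  | @cons a b c h p ih =>
    obtain ⟨W', hW'⟩ := ih
    have h' : ((cubeGraph U).induce B).Adj ⟨a.1, hAB a.2⟩ ⟨b.1, hAB b.2⟩ := h
    exact ⟨SimpleGraph.Walk.cons h' W', by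
      rw [SimpleGraph.Walk.length_cons, SimpleGraph.Walk.length_cons, hW']⟩

lemma exists_geodesic {A : Set (U → Bool)} (hA : IsPartialCube A) {x y : U → Bool}
    (hx : x ∈ A) (hy : y ∈ A) :
    ∃ W : ((cubeGraph U).induce A).Walk ⟨x, hx⟩ ⟨y, hy⟩, W.length = hDist x y := by
  obtain ⟨W, hW⟩ := (hA.1.preconnected ⟨x, hx⟩ ⟨y, hy⟩).exists_walk_length_eq_dist
  refine ⟨W, ?_⟩
  rw [hW]
  have h2 := hA.2 x hx y hy
  rw [dIn, dif_pos ⟨hx, hy⟩] at h2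
  exact h2

lemma geodesic_flip {A : Set (U → Bool)} {x y : ↥A}
    (W : ((cubeGraph U).induce A).Walk x y) :
    W.length = hDist x.1 y.1 → ∀ i0 : U, x.1 i0 ≠ y.1 i0 →
    ∃ u' u'' : ↥A, hDist u'.1 u''.1 = 1 ∧ u'.1 i0 ≠ u''.1 i0 ∧ u''.1 i0 = y.1 i0 ∧
      ∀ j, x.1 j = y.1 j → u''.1 j = y.1 j := by
  induction W with
  | nil => intro _ i0 hne; exact absurd rfl hne
  | @cons a b c h p ih =>
    intro hlen i0 hne
    have hadj : hDist a.1 b.1 = 1 := h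
    have hp_ge : hDist b.1 c.1 ≤ p.length := walk_le_hDist p
    have htri : hDist a.1 c.1 ≤ hDist a.1 b.1 + hDist b.1 c.1 := hDist_triangle _ _ _
    rw [SimpleGraph.Walk.length_cons] at hlen
    have hlen' : p.length = hDist b.1 c.1 := by omega
    have hbet : hDist a.1 b.1 + hDist b.1 c.1 = hDist a.1 c.1 := by omega
    by_cases hflip : a.1 i0 = b.1 i0
    · have hne' : b.1 i0 ≠ c.1 i0 := by rw [← hflip]; exact hne
      obtain ⟨u', u'', h1, h2, h3, h4⟩ := ih hlen' i0 hne'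
      exact ⟨u', u'', h1, h2, h3, fun j hj => h4 j (between_agree hbet j hj)⟩
    · refine ⟨a, b, hadj, hflip, ?_, fun j hj => between_agree hbet j hj⟩
      revert hflip hne
      cases a.1 i0 <;> cases b.1 i0 <;> cases c.1 i0 <;> simp

omit [Fintype U] [DecidableEq U] in
lemma subset_cubeHull (H : Set (U → Bool)) : H ⊆ cubeHull H :=
  fun h hh _ => ⟨h, hh, rfl⟩

lemma gate_hull {H : Set (U → Bool)} {v g : U → Bool}
    (hg : ∀ h ∈ H, hDist v g + hDist g h = hDist v h) :
    ∀ y ∈ cubeHull H, hDist v g + hDist g y = hDist v y := by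
  intro y hy
  apply hDist_add_eq_iff.mpr
  intro i
  by_cases hvi : g i = v i
  · exact Or.inl hvi
  · obtain ⟨h, hh, hyh⟩ := hy i
    rcases hDist_add_eq_iff.mp (hg h hh) i with h1 | h1
    · exact absurd h1 hvi
    · exact Or.inr (by rw [h1, hyh])

end Helpers

/-- Let `S` be a partial cube, `H` a gated subgraph of `S`, and `H'` an
isometric subgraph of the hypercube with `H ⊆ H' ⊆ C(H)`.  Let `S ∪ H'` be the extension.
Then (i) `S ∪ H'` is an isometric subgraph (partial cube); (ii) `H'` is gated in `S ∪ H'`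
and for every vertex of `S` its gates in `H` and in `H'` coincide; (iii) the VC-dimension of
`S ∪ H'` is the maximum of those of `S` and `H'`. -/
theorem stmt19 [Fintype U] [DecidableEq U] (S H H' : Set (U → Bool))
    (hS : IsPartialCube S) (hHS : H ⊆ S)
    (hgated : ∀ v ∈ S, ∃ g ∈ H, ∀ y ∈ H, dIn S v y = dIn S v g + dIn S g y)
    (hHH' : H ⊆ H') (hH'C : H' ⊆ cubeHull H) (hH' : IsPartialCube H') :
    IsPartialCube (S ∪ H') ∧
    (∀ v ∈ S ∪ H', ∃ g ∈ H',
      ∀ y ∈ H', dIn (S ∪ H') v y = dIn (S ∪ H') v g + dIn (S ∪ H') g y) ∧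
    (∀ v ∈ S, ∀ g ∈ H, (∀ y ∈ H, dIn S v y = dIn S v g + dIn S g y) →
      g ∈ H' ∧ ∀ y ∈ H', dIn (S ∪ H') v y = dIn (S ∪ H') v g + dIn (S ∪ H') g y) ∧
    (∀ d : ℕ, (∀ X : Finset U, Shatters (S ∪ H') X → X.card ≤ d) ↔
      ((∀ X : Finset U, Shatters S X → X.card ≤ d) ∧
        (∀ X : Finset U, Shatters H' X → X.card ≤ d))) := by
  classical
  -- a gate in `H` (for the graph metric of `S`) is also a gate for the Hamming metric,
  -- with respect to the whole hull of `H`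
  have hgateD : ∀ v ∈ S, ∃ g ∈ H, ∀ y ∈ cubeHull H,
      hDist v g + hDist g y = hDist v y := by
    intro v hv
    obtain ⟨g, hgH, hgate⟩ := hgated v hv
    refine ⟨g, hgH, gate_hull ?_⟩
    intro h hh
    have h1 := hgate h hh
    rw [hS.2 v hv h (hHS hh), hS.2 v hv g (hHS hgH), hS.2 g (hHS hgH) h (hHS hh)] at h1
    omega
  -- master lemma: geodesics exist in `S ∪ H'` between any two vertices
  have key : ∀ x, ∀ hx : x ∈ S ∪ H', ∀ y, ∀ hy : y ∈ S ∪ H',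
      ∃ W : ((cubeGraph U).induce (S ∪ H')).Walk ⟨x, hx⟩ ⟨y, hy⟩,
        W.length = hDist x y := by
    have mixed : ∀ x, ∀ hxS : x ∈ S, ∀ y, ∀ hyH : y ∈ H',
        ∃ W : ((cubeGraph U).induce (S ∪ H')).Walk ⟨x, Or.inl hxS⟩ ⟨y, Or.inr hyH⟩,
          W.length = hDist x y := by
      intro x hxS y hyH
      obtain ⟨g, hgH, hgate⟩ := hgateD x hxS
      obtain ⟨W1, hW1⟩ := exists_geodesic hS hxS (hHS hgH)
      obtain ⟨W1', hW1'⟩ := walk_mono Set.subset_union_left W1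
      obtain ⟨W2, hW2⟩ := exists_geodesic hH' (hHH' hgH) hyH
      obtain ⟨W2', hW2'⟩ := walk_mono Set.subset_union_right W2
      refine ⟨W1'.append W2', ?_⟩
      rw [SimpleGraph.Walk.length_append, hW1', hW2', hW1, hW2]
      exact hgate y (hH'C hyH)
    intro x hx y hy
    rcases hx with hxS | hxH'
    · rcases hy with hyS | hyH'
      · obtain ⟨W, hW⟩ := exists_geodesic hS hxS hyS
        obtain ⟨W', hW'⟩ := walk_mono Set.subset_union_left W
        exact ⟨W', by rw [hW', hW]⟩
      · exact mixed x hxS y hyH'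
    · rcases hy with hyS | hyH'
      · obtain ⟨W, hW⟩ := mixed y hyS x hxH'
        exact ⟨W.reverse, by rw [SimpleGraph.Walk.length_reverse, hW, hDist_comm]⟩
      · obtain ⟨W, hW⟩ := exists_geodesic hH' hxH' hyH'
        obtain ⟨W', hW'⟩ := walk_mono Set.subset_union_right W
        exact ⟨W', by rw [hW', hW]⟩
  -- part (i)
  have hPC : IsPartialCube (S ∪ H') := by
    constructor
    · have hnonempty : Nonempty ↥(S ∪ H') := by
        obtain ⟨⟨v, hv⟩⟩ := hS.1.nonempty
        exact ⟨⟨v, Or.inl hv⟩⟩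
      refine ⟨fun a b => ?_⟩
      obtain ⟨W, _⟩ := key a.1 a.2 b.1 b.2
      exact ⟨W⟩
    · intro x hx y hy
      rw [dIn, dif_pos ⟨hx, hy⟩]
      apply le_antisymm
      · obtain ⟨W, hW⟩ := key x hx y hy
        exact hW ▸ SimpleGraph.dist_le W
      · have hreach : ((cubeGraph U).induce (S ∪ H')).Reachable ⟨x, hx⟩ ⟨y, hy⟩ :=
          ⟨(key x hx y hy).choose⟩
        obtain ⟨W0, hW0⟩ := hreach.exists_walk_length_eq_dist
        rw [← hW0]
        exact walk_le_hDist W0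
  have dInU : ∀ x ∈ S ∪ H', ∀ y ∈ S ∪ H', dIn (S ∪ H') x y = hDist x y := hPC.2
  refine ⟨hPC, ?_, ?_, ?_⟩
  -- part (ii)
  · intro v hv
    by_cases hvS : v ∈ S
    · obtain ⟨g, hgH, hgate⟩ := hgateD v hvS
      refine ⟨g, hHH' hgH, fun y hy => ?_⟩
      rw [dInU v hv y (Or.inr hy), dInU v hv g (Or.inr (hHH' hgH)),
          dInU g (Or.inr (hHH' hgH)) y (Or.inr hy)]
      exact (hgate y (hH'C hy)).symm
    · have hvH' : v ∈ H' := hv.resolve_left hvS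
      refine ⟨v, hvH', fun y hy => ?_⟩
      rw [dInU v hv y (Or.inr hy), dInU v hv v hv, hDist_self]
      omega
  -- part (iii)
  · intro v hvS g hgH hgate
    have hg' : ∀ y ∈ cubeHull H, hDist v g + hDist g y = hDist v y := by
      apply gate_hull
      intro h hh
      have h1 := hgate h hh
      rw [hS.2 v hvS h (hHS hh), hS.2 v hvS g (hHS hgH), hS.2 g (hHS hgH) h (hHS hh)] at h1
      omega
    refine ⟨hHH' hgH, fun y hy => ?_⟩
    rw [dInU v (Or.inl hvS) y (Or.inr hy), dInU v (Or.inl hvS) g (Or.inr (hHH' hgH)),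
        dInU g (Or.inr (hHH' hgH)) y (Or.inr hy)]
    exact (hg' y (hH'C hy)).symm
  -- part (iv)
  · intro d
    constructor
    · intro hd
      refine ⟨fun X hX => hd X ?_, fun X hX => hd X ?_⟩
      · intro g; obtain ⟨a, ha, h⟩ := hX g; exact ⟨a, Or.inl ha, h⟩
      · intro g; obtain ⟨a, ha, h⟩ := hX g; exact ⟨a, Or.inr ha, h⟩
    · rintro ⟨hdS, hdH'⟩ X hX
      by_cases hall : ∀ g : U → Bool, ∃ a ∈ S, ∀ i ∈ X, a i = g i
      · exact hdS X hall
      push_neg at hall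
      obtain ⟨g, hg⟩ := hall
      obtain ⟨y, hy, hyg⟩ := hX g
      have hyH' : y ∈ H' := by
        rcases hy with hyS | h
        · obtain ⟨i, hiX, hne⟩ := hg y hyS
          exact absurd (hyg i hiX) hne
        · exact h
      -- every coordinate of `X` is non-constant on `H`
      have hnc : ∀ i0 ∈ X, ∃ h1 ∈ H, ∃ h2 ∈ H, h1 i0 ≠ h2 i0 := by
        intro i0 hi0
        by_contra hcon
        push_neg at hcon
        obtain ⟨h0, hh0, hyh0⟩ := hH'C hyH' i0
        have hconst : ∀ w ∈ H', w i0 = y i0 := by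
          intro w hw
          obtain ⟨h, hh, hwh⟩ := hH'C hw i0
          rw [hwh, hcon h hh h0 hh0, ← hyh0]
        obtain ⟨u, hu, hug'⟩ := hX (fun i => if i = i0 then !(y i0) else g i)
        have hub : u i0 = !(y i0) := by rw [hug' i0 hi0]; simp
        have huS : u ∈ S := by
          rcases hu with h | h
          · exact h
          · have := hconst u h
            rw [hub] at this
            simp at this
        have hne : u i0 ≠ y i0 := by rw [hub]; simp
        obtain ⟨W, hW⟩ := key u (Or.inl huS) y (Or.inr hyH')
        obtain ⟨u', u'', hd1, hflip, hu''i0x, hagreex⟩ := geodesic_flip W hW i0 hne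
        have hu''i0 : u''.1 i0 = y i0 := hu''i0x
        have hagree : ∀ j, u j = y j → u''.1 j = y j := hagreex
        -- `u''` realizes `g` on `X`
        have hu''g : ∀ i ∈ X, u''.1 i = g i := by
          intro i hi
          by_cases hii : i = i0
          · subst hii
            rw [hu''i0]
            exact hyg i hi
          · have h1 : u i = y i := by
              rw [hug' i hi, hyg i hi]
              simp [hii]
            rw [hagree i h1]
            exact hyg i hi
        have hu''nS : u''.1 ∉ S := by
          intro hcS
          obtain ⟨i, hiX, hnei⟩ := hg u''.1 hcS
          exact hnei (hu''g i hiX)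
        have hu''H' : u''.1 ∈ H' := u''.2.resolve_left hu''nS
        have hu'b : u'.1 i0 ≠ y i0 := by
          rw [← hu''i0]
          exact hflip
        have hu'S : u'.1 ∈ S := u'.2.resolve_right (fun h => hu'b (hconst _ h))
        obtain ⟨p, hpH, hpgate⟩ := hgateD u'.1 hu'S
        have h1 : hDist u'.1 p + hDist p u''.1 = 1 := by
          rw [hpgate u''.1 (hH'C hu''H'), hd1]
        have hpne : hDist u'.1 p ≠ 0 := by
          intro h0
          have he := hDist_eq_zero h0
          exact hu'b (he ▸ hconst p (hHH' hpH))
        have h2 : hDist p u''.1 = 0 := by omega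
        have he := hDist_eq_zero h2
        exact hu''nS (he ▸ hHS hpH)
      -- `H'` shatters `X`
      refine hdH' X ?_
      intro a
      obtain ⟨z, hz, hza⟩ := hX a
      rcases hz with hzS | hzH'
      · obtain ⟨p, hpH, hpgate⟩ := hgateD z hzS
        refine ⟨p, hHH' hpH, fun i hi => ?_⟩
        obtain ⟨h1, hh1, h2, hh2, hne12⟩ := hnc i hi
        have c1 := hDist_add_eq_iff.mp (hpgate h1 (subset_cubeHull H hh1)) i
        have c2 := hDist_add_eq_iff.mp (hpgate h2 (subset_cubeHull H hh2)) i
        have hpz : p i = z i := by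
          rcases c1 with e | e
          · exact e
          rcases c2 with e' | e'
          · exact e'
          exact absurd (e.symm.trans e') hne12
        rw [hpz]
        exact hza i hi
      · exact ⟨z, hzH', hza⟩
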